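/- The unperturbed learning dynamics converges to an aligned state in finitely many steps: for every initial joint state x there exists a natural number k such that the k-th iterate (F⁰)^k(x) is a fixed point of F⁰; consequently, the only recurrence classes of the unperturbed process are the singleton sets {z} where z is a state in which no proposer is watchful and every proposer's baseline utility equals the utility it receives when all proposers play their baseline actions. -/

import Mathlib

set_option linter.unusedSectionVars false
/-- A two-sided matching market with proposers `P` and acceptors `A`.
`OP i` is proposer `i`'s preference function over `A ∪ {∅}` (where `none` is `∅`),
and `OA j` is acceptor `j`'s preference function over `P ∪ {∅}`. -/
structure Market (P A : Type) [Fintype P] [Fintype A] where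
  OP : P → Option A → ℝ
  OA : A → Option P → ℝ
  OP_inj : ∀ i, Function.Injective (OP i)
  OA_inj : ∀ j, Function.Injective (OA j)
  OP_none : ∀ i, OP i none = 0
  OA_none : ∀ j, OA j none = 0
  OP_pos : ∀ i j, 0 < OP i (some j)
  OA_pos : ∀ j i, 0 < OA j (some i)
  OP_le_one : ∀ i o, OP i o ≤ 1
  OA_le_one : ∀ j o, OA j o ≤ 1

/-- A match: each proposer gets a partner in `A ∪ {∅}`, each acceptor a partner
in `P ∪ {∅}`, consistently. -/
structure Matching (P A : Type) where
  μP : P → Option A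
  μA : A → Option P
  consistent : ∀ i j, μP i = some j ↔ μA j = some i

/-- A match is stable if there is no proposer–acceptor pair who strictly prefer
each other to their assigned partners. -/
def Stable {P A : Type} [Fintype P] [Fintype A] (M : Market P A) (μ : Matching P A) : Prop :=
  ¬ ∃ (i : P) (j : A), M.OP i (some j) > M.OP i (μ.μP i) ∧ M.OA j (some i) > M.OA j (μ.μA j)

variable {P A : Type} [Fintype P] [Fintype A] [DecidableEq P] [DecidableEq A]

/-- Given an action profile `a`, acceptor `j` accepts its most preferred
proposer among those proposing to it (if any). -/
noncomputable def accept (M : Market P A) (a : P → Option A) (j : A) : Option P :=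
  if h : (Finset.univ.filter fun i => a i = some j).Nonempty then
    some (Classical.choose
      ((Finset.univ.filter fun i => a i = some j).exists_max_image
        (fun i => M.OA j (some i)) h))
  else none

theorem accept_spec {M : Market P A} {a : P → Option A} {j : A} {i : P}
    (h : accept M a j = some i) :
    a i = some j ∧ ∀ i', a i' = some j → M.OA j (some i') ≤ M.OA j (some i) := by
  unfold accept at h
  split_ifs at h with hne
  · obtain ⟨hmem, hmax⟩ := Classical.choose_spec
      ((Finset.univ.filter fun i => a i = some j).exists_max_image
        (fun i => M.OA j (some i)) hne)
    have hi : Classical.choose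
        ((Finset.univ.filter fun i => a i = some j).exists_max_image
          (fun i => M.OA j (some i)) hne) = i := Option.some_injective _ h
    rw [hi] at hmem hmax
    refine ⟨by simpa using hmem, fun i' hi' => hmax i' (by simpa using hi')⟩

theorem accept_of_propose {M : Market P A} {a : P → Option A} {j : A} {i : P}
    (h : a i = some j) : ∃ i', accept M a j = some i' := by
  unfold accept
  have hne : (Finset.univ.filter fun i => a i = some j).Nonempty :=
    ⟨i, by simpa using h⟩
  rw [dif_pos hne]
  exact ⟨_, rfl⟩

/-- The match resulting from an action profile `a`. -/
noncomputable def matchOf (M : Market P A) (a : P → Option A) : Matching P A where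
  μP i := (a i).bind fun j => if accept M a j = some i then some j else none
  μA j := accept M a j
  consistent := by
    intro i j
    constructor
    · intro h
      rcases Option.bind_eq_some_iff.mp h with ⟨j', hj', hif⟩
      by_cases hc : accept M a j' = some i
      · rw [if_pos hc] at hif
        exact (Option.some_injective _ hif) ▸ hc
      · rw [if_neg hc] at hif
        exact absurd hif (by simp)
    · intro h
      have hai : a i = some j := (accept_spec h).1
      show (a i).bind _ = some j
      rw [hai]
      simp [h]

/-- The utility of proposer `i` under action profile `a`. -/
noncomputable def util (M : Market P A) (a : P → Option A) (i : P) : ℝ :=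
  M.OP i ((matchOf M a).μP i)

/-- Pure Nash equilibrium: no proposer can strictly increase its utility by a
unilateral deviation. -/
def IsNash (M : Market P A) (a : P → Option A) : Prop :=
  ∀ (i : P) (a' : Option A), util M (Function.update a i a') i ≤ util M a i

/-- The mood of a proposer: content, watchful, or discontent. -/
inductive Mood | C | W | D
deriving DecidableEq

/-- A proposer's state: a mood, a baseline action, and a baseline utility. -/
abbrev LState (P A : Type) := Mood × Option A × ℝ

/-- Joint states are valid when every discontent proposer has baseline action `∅`
and baseline utility `0`. -/
def ValidState {P A : Type} (x : P → LState P A) : Prop :=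
  ∀ i, (x i).1 = Mood.D → (x i).2.1 = none ∧ (x i).2.2 = 0

/-- The unperturbed learning dynamics (experimentation rate `ε = 0`): every
proposer plays its baseline action and updates its state deterministically. -/
noncomputable def F0 (M : Market P A) (x : P → LState P A) : P → LState P A :=
  fun i =>
    let abar : P → Option A := fun k => (x k).2.1
    let u : ℝ := util M abar i
    let ubar : ℝ := (x i).2.2
    match (x i).1 with
    | Mood.C => if ubar ≤ u then (Mood.C, (x i).2.1, u) else (Mood.W, (x i).2.1, ubar)
    | Mood.W => if ubar ≤ u then (Mood.C, (x i).2.1, ubar) else (Mood.D, none, 0)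
    | Mood.D => (Mood.D, none, 0)

/-- Unfolded form of `F0`. -/
lemma F0_def (M : Market P A) (x : P → LState P A) (i : P) :
    F0 M x i =
      match (x i).1 with
      | Mood.C => if (x i).2.2 ≤ util M (fun k => (x k).2.1) i
          then (Mood.C, (x i).2.1, util M (fun k => (x k).2.1) i)
          else (Mood.W, (x i).2.1, (x i).2.2)
      | Mood.W => if (x i).2.2 ≤ util M (fun k => (x k).2.1) i
          then (Mood.C, (x i).2.1, (x i).2.2) else (Mood.D, none, 0)
      | Mood.D => (Mood.D, none, 0) := rfl

lemma F0_of_D (M : Market P A) (x : P → LState P A) (i : P) (h : (x i).1 = Mood.D) :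
    F0 M x i = (Mood.D, none, 0) := by
  rw [F0_def, h]

lemma F0_of_C_le (M : Market P A) (x : P → LState P A) (i : P) (h : (x i).1 = Mood.C)
    (hle : (x i).2.2 ≤ util M (fun k => (x k).2.1) i) :
    F0 M x i = (Mood.C, (x i).2.1, util M (fun k => (x k).2.1) i) := by
  rw [F0_def, h]; simp [hle]

lemma F0_of_C_gt (M : Market P A) (x : P → LState P A) (i : P) (h : (x i).1 = Mood.C)
    (hgt : ¬ (x i).2.2 ≤ util M (fun k => (x k).2.1) i) :
    F0 M x i = (Mood.W, (x i).2.1, (x i).2.2) := by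
  rw [F0_def, h]; simp [hgt]

lemma F0_of_W_le (M : Market P A) (x : P → LState P A) (i : P) (h : (x i).1 = Mood.W)
    (hle : (x i).2.2 ≤ util M (fun k => (x k).2.1) i) :
    F0 M x i = (Mood.C, (x i).2.1, (x i).2.2) := by
  rw [F0_def, h]; simp [hle]

lemma F0_of_W_gt (M : Market P A) (x : P → LState P A) (i : P) (h : (x i).1 = Mood.W)
    (hgt : ¬ (x i).2.2 ≤ util M (fun k => (x k).2.1) i) :
    F0 M x i = (Mood.D, none, 0) := by
  rw [F0_def, h]; simp [hgt]

lemma valid_F0 (M : Market P A) (x : P → LState P A) : ValidState (F0 M x) := by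
  intro i h
  rcases hm : (x i).1 with _ | _ | _
  · by_cases hle : (x i).2.2 ≤ util M (fun k => (x k).2.1) i
    · rw [F0_of_C_le M x i hm hle] at h ⊢; simp at h
    · rw [F0_of_C_gt M x i hm hle] at h ⊢; simp at h
  · by_cases hle : (x i).2.2 ≤ util M (fun k => (x k).2.1) i
    · rw [F0_of_W_le M x i hm hle] at h ⊢; simp at h
    · rw [F0_of_W_gt M x i hm hle]; exact ⟨rfl, rfl⟩
  · rw [F0_of_D M x i hm]; exact ⟨rfl, rfl⟩

lemma D_persist (M : Market P A) (x : P → LState P A) (i : P) (h : (x i).1 = Mood.D) :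
    (F0 M x i).1 = Mood.D := by rw [F0_of_D M x i h]

lemma util_none (M : Market P A) (a : P → Option A) (i : P) (h : a i = none) :
    util M a i = 0 := by
  unfold util matchOf
  simp [h, M.OP_none]

/-- If no proposer becomes discontent in one step, baseline actions are unchanged. -/
lemma abar_eq (M : Market P A) (x : P → LState P A) (hv : ValidState x)
    (hnd : ∀ i, (F0 M x i).1 = Mood.D → (x i).1 = Mood.D) (i : P) :
    (F0 M x i).2.1 = (x i).2.1 := by
  rcases hm : (x i).1 with _ | _ | _
  · by_cases hle : (x i).2.2 ≤ util M (fun k => (x k).2.1) i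
    · rw [F0_of_C_le M x i hm hle]
    · rw [F0_of_C_gt M x i hm hle]
  · by_cases hle : (x i).2.2 ≤ util M (fun k => (x k).2.1) i
    · rw [F0_of_W_le M x i hm hle]
    · exfalso
      have := hnd i (by rw [F0_of_W_gt M x i hm hle])
      rw [hm] at this; exact Mood.noConfusion this
  · rw [F0_of_D M x i hm, (hv i hm).1]

/-- If no proposer becomes discontent over two steps, the state after two steps
is a fixed point of `F0`. -/
lemma stabilize (M : Market P A) (x : P → LState P A) (hv : ValidState x)
    (hnd : ∀ i, ((F0 M)^[2] x i).1 = Mood.D → (x i).1 = Mood.D) :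
    F0 M ((F0 M)^[2] x) = (F0 M)^[2] x := by
  have hit2 : (F0 M)^[2] x = F0 M (F0 M x) := by
    rw [show (2:ℕ) = 1 + 1 from rfl, Function.iterate_add_apply]; simp
  have hnd1 : ∀ i, (F0 M x i).1 = Mood.D → (x i).1 = Mood.D := by
    intro i h
    exact hnd i (by rw [hit2]; exact D_persist M (F0 M x) i h)
  have hnd2 : ∀ i, (F0 M (F0 M x) i).1 = Mood.D → (F0 M x i).1 = Mood.D := by
    intro i h
    exact D_persist M x i (hnd i (by rw [hit2]; exact h))
  -- baseline actions are constant
  have ha1 : (fun k => (F0 M x k).2.1) = fun k => (x k).2.1 :=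
    funext fun k => abar_eq M x hv hnd1 k
  have ha2 : (fun k => (F0 M (F0 M x) k).2.1) = fun k => (x k).2.1 := by
    rw [funext fun k => abar_eq M (F0 M x) (valid_F0 M x) hnd2 k, ha1]
  set a : P → Option A := fun k => (x k).2.1 with hadef
  set u : P → ℝ := fun i => util M a i with hudef
  -- shape of the state after two steps
  have key : ∀ i, F0 M (F0 M x) i = (Mood.D, none, 0) ∨
      F0 M (F0 M x) i = (Mood.C, a i, u i) := by
    intro i
    rcases hm : (x i).1 with _ | _ | _
    · by_cases hle : (x i).2.2 ≤ u i
      · right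
        have h1 := F0_of_C_le M x i hm hle
        have h1m : (F0 M x i).1 = Mood.C := by rw [h1]
        have hle2 : (F0 M x i).2.2 ≤ util M (fun k => (F0 M x k).2.1) i := by
          rw [h1, ha1]
        have := F0_of_C_le M (F0 M x) i h1m hle2
        rw [this, ha1, h1]
      · exfalso
        have h1 := F0_of_C_gt M x i hm hle
        have h1m : (F0 M x i).1 = Mood.W := by rw [h1]
        have hgt2 : ¬ (F0 M x i).2.2 ≤ util M (fun k => (F0 M x k).2.1) i := by
          rw [h1, ha1]; exact hle
        have h2 := F0_of_W_gt M (F0 M x) i h1m hgt2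
        have := hnd2 i (by rw [h2])
        rw [h1m] at this; exact Mood.noConfusion this
    · by_cases hle : (x i).2.2 ≤ u i
      · right
        have h1 := F0_of_W_le M x i hm hle
        have h1m : (F0 M x i).1 = Mood.C := by rw [h1]
        have hle2 : (F0 M x i).2.2 ≤ util M (fun k => (F0 M x k).2.1) i := by
          rw [h1, ha1]; exact hle
        have := F0_of_C_le M (F0 M x) i h1m hle2
        rw [this, ha1, h1]
      · exfalso
        have h1 := F0_of_W_gt M x i hm hle
        have := hnd1 i (by rw [h1])
        rw [hm] at this; exact Mood.noConfusion this
    · left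
      have h1 := F0_of_D M x i hm
      exact F0_of_D M (F0 M x) i (by rw [h1])
  -- conclude fixed point
  rw [hit2]
  funext i
  rcases key i with h | h
  · rw [F0_of_D M (F0 M (F0 M x)) i (by rw [h]), h]
  · have hm : (F0 M (F0 M x) i).1 = Mood.C := by rw [h]
    have hle : (F0 M (F0 M x) i).2.2 ≤ util M (fun k => (F0 M (F0 M x) k).2.1) i := by
      rw [h, ha2]
    rw [F0_of_C_le M (F0 M (F0 M x)) i hm hle, ha2, h]

/-- Properties of a fixed point of `F0`. -/
lemma fixed_props (M : Market P A) (z : P → LState P A) (hz : F0 M z = z) :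
    (∀ i, (z i).1 ≠ Mood.W) ∧
      ∀ i, (z i).2.2 = util M (fun k' => (z k').2.1) i := by
  have hW : ∀ i, (z i).1 ≠ Mood.W := by
    intro i h
    by_cases hle : (z i).2.2 ≤ util M (fun k => (z k).2.1) i
    · have := F0_of_W_le M z i h hle
      rw [hz] at this
      have : (z i).1 = Mood.C := by rw [this]
      rw [h] at this; exact Mood.noConfusion this
    · have := F0_of_W_gt M z i h hle
      rw [hz] at this
      have : (z i).1 = Mood.D := by rw [this]
      rw [h] at this; exact Mood.noConfusion this
  refine ⟨hW, fun i => ?_⟩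
  rcases hm : (z i).1 with _ | _ | _
  · by_cases hle : (z i).2.2 ≤ util M (fun k => (z k).2.1) i
    · have := F0_of_C_le M z i hm hle
      rw [hz] at this
      exact congrArg (fun p => p.2.2) this
    · have := F0_of_C_gt M z i hm hle
      rw [hz] at this
      have : (z i).1 = Mood.W := by rw [this]
      exact absurd this (hW i)
  · exact absurd hm (hW i)
  · have := F0_of_D M z i hm
    rw [hz] at this
    have h2 : (z i).2.1 = none := by rw [this]
    have h3 : (z i).2.2 = 0 := by rw [this]
    rw [h3, util_none M _ i h2]

/-- The unperturbed learning dynamics converges to an aligned state in finitely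
many steps: from every (valid) initial joint state, some iterate of `F0` is a
fixed point of `F0`; hence the only recurrence classes of the unperturbed process
are the singletons of states in which no proposer is watchful and every
proposer's baseline utility equals the utility received when all play their
baseline actions. -/
theorem f0_converges_to_aligned [Nonempty P] [Nonempty A]
    (M : Market P A) (x : P → LState P A) (hvalid : ValidState x) :
    ∃ k : ℕ, F0 M ((F0 M)^[k] x) = (F0 M)^[k] x ∧
      (∀ i, (((F0 M)^[k] x) i).1 ≠ Mood.W) ∧
      ∀ i, (((F0 M)^[k] x) i).2.2 =
        util M (fun k' => (((F0 M)^[k] x) k').2.1) i := by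
  suffices h : ∀ (n : ℕ) (y : P → LState P A), ValidState y →
      (Finset.univ.filter fun i => (y i).1 ≠ Mood.D).card ≤ n →
      ∃ k, F0 M ((F0 M)^[k] y) = (F0 M)^[k] y by
    obtain ⟨k, hk⟩ := h _ x hvalid le_rfl
    exact ⟨k, hk, (fixed_props M _ hk).1, (fixed_props M _ hk).2⟩
  intro n
  induction n with
  | zero =>
    intro y hv hc
    have hall : ∀ i, (y i).1 = Mood.D := by
      intro i
      by_contra hne
      have : i ∈ Finset.univ.filter fun i => (y i).1 ≠ Mood.D := by
        simp [hne]
      have := Finset.card_pos.mpr ⟨i, this⟩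
      omega
    exact ⟨2, stabilize M y hv (fun i _ => hall i)⟩
  | succ n ih =>
    intro y hv hc
    by_cases hnd : ∀ i, ((F0 M)^[2] y i).1 = Mood.D → (y i).1 = Mood.D
    · exact ⟨2, stabilize M y hv hnd⟩
    · push_neg at hnd
      obtain ⟨i0, hD2, hND0⟩ := hnd
      have hit2 : (F0 M)^[2] y = F0 M (F0 M y) := rfl
      have hv2 : ValidState ((F0 M)^[2] y) := by rw [hit2]; exact valid_F0 M _
      have hsub : (Finset.univ.filter fun i => (((F0 M)^[2] y) i).1 ≠ Mood.D) ⊆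
          (Finset.univ.filter fun i => (y i).1 ≠ Mood.D) := by
        intro i hi
        simp only [Finset.mem_filter, Finset.mem_univ, true_and] at hi ⊢
        intro hD
        exact hi (by rw [hit2]; exact D_persist M _ i (D_persist M _ i hD))
      have hss : (Finset.univ.filter fun i => (((F0 M)^[2] y) i).1 ≠ Mood.D) ⊂
          (Finset.univ.filter fun i => (y i).1 ≠ Mood.D) := by
        refine ⟨hsub, fun hts => ?_⟩
        have hi0 : i0 ∈ Finset.univ.filter fun i => (y i).1 ≠ Mood.D := by
          simp [hND0]
        have := hts hi0
        simp only [Finset.mem_filter, Finset.mem_univ, true_and] at this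
        exact this hD2
      have hcard := Finset.card_lt_card hss
      obtain ⟨k, hk⟩ := ih ((F0 M)^[2] y) hv2 (by omega)
      refine ⟨k + 2, ?_⟩
      rw [Function.iterate_add_apply]
      exact hk
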